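/- arXiv:1008.1978 — 2 statements merged into one kernel-verified Lean document; each statement's English description precedes it below -/
import Mathlib

section
/- For a finite abelian group G in which the maximal order of an element is m, the Davenport-type constant satisfies n(G) < m(1 + log(|G|/m)), where n(G) is the length of the longest sequence of elements of G with no nonempty zero-sum subsequence. -/
open Finset

/-- A sequence in an additive group with no nonempty zero-sum subsequence. -/
def IsZeroSumFree {G : Type*} [AddCommGroup G] {k : ℕ} (g : Fin k → G) : Prop :=
  ∀ S : Finset (Fin k), S.Nonempty → ∑ i ∈ S, g i ≠ 0

namespace EBK

/-! ### Greedy covering lemma -/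

section Cover
variable {α : Type*} [Fintype α] [DecidableEq α] {k m : ℕ} [NeZero m]

lemma pigeon (v : α → ZMod m) (R : Finset α) :
    ∃ c : ZMod m, (R.filter fun a => v a ≠ c).card * m ≤ R.card * (m - 1) := by
  rcases R.eq_empty_or_nonempty with h | h
  · exact ⟨0, by simp [h]⟩
  have hfib : ∃ c : ZMod m, R.card ≤ m * (R.filter fun a => v a = c).card := by
    by_contra hc
    push_neg at hc
    have hsum : ∑ c : ZMod m, (R.filter fun a => v a = c).card = R.card :=
      (Finset.card_eq_sum_card_fiberwise (fun a _ => Finset.mem_univ (v a))).symm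
    have h1 : m * R.card ≤ ∑ c : ZMod m, (m * (R.filter fun a => v a = c).card) := by
      rw [← Finset.mul_sum, hsum]
    have h2 : ∑ c : ZMod m, (m * (R.filter fun a => v a = c).card)
        ≤ ∑ _c : ZMod m, (R.card - 1) :=
      Finset.sum_le_sum fun c _ => Nat.le_sub_one_of_lt (hc c)
    have h3 : ∑ _c : ZMod m, (R.card - 1) = m * (R.card - 1) := by
      simp [Finset.sum_const, ZMod.card, mul_comm]
    have h4 : m * R.card ≤ m * (R.card - 1) := le_trans h1 (h2.trans_eq h3)
    have h5 : R.card ≤ R.card - 1 := Nat.le_of_mul_le_mul_left h4 (NeZero.pos m)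
    have h6 : 1 ≤ R.card := Finset.card_pos.mpr h
    omega
  obtain ⟨c, hc⟩ := hfib
  refine ⟨c, ?_⟩
  have hsplit := Finset.card_filter_add_card_filter_not (s := R)
      (p := fun a => v a = c)
  set f := (R.filter fun a => v a = c).card with hf
  set gg := (R.filter fun a => ¬ v a = c).card with hg
  have hgf : gg + f = R.card := by omega
  have key : gg * m + R.card ≤ R.card * m := by
    calc gg * m + R.card ≤ gg * m + m * f := by omega
      _ = (gg + f) * m := by ring
      _ = R.card * m := by rw [hgf]
  show gg * m ≤ R.card * (m-1)
  have hm1 : R.card * (m - 1) = R.card * m - R.card := by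
    cases m with
    | zero => simp
    | succ m' => rw [Nat.succ_sub_one, Nat.mul_succ]; omega
  omega

lemma phase1 (v : Fin k → α → ZMod m) (S : Finset (Fin k)) (R : Finset α) :
    ∃ c : Fin k → ZMod m,
      (R.filter fun a => ∀ i ∈ S, v i a ≠ c i).card * m ^ S.card
        ≤ R.card * (m - 1) ^ S.card := by
  classical
  induction S using Finset.induction_on generalizing R with
  | empty => exact ⟨fun _ => 0, by simp⟩
  | @insert i S hiS ih =>
    obtain ⟨c₀, hc₀⟩ := pigeon (v i) R
    set R' := R.filter fun a => v i a ≠ c₀ with hR'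
    obtain ⟨c', hc'⟩ := ih R'
    refine ⟨Function.update c' i c₀, ?_⟩
    have hsub : (R.filter fun a => ∀ j ∈ insert i S, v j a ≠ Function.update c' i c₀ j)
        ⊆ R'.filter fun a => ∀ j ∈ S, v j a ≠ c' j := by
      intro a ha
      rw [Finset.mem_filter] at ha ⊢
      obtain ⟨haR, hall⟩ := ha
      constructor
      · rw [hR', Finset.mem_filter]
        refine ⟨haR, ?_⟩
        have := hall i (Finset.mem_insert_self i S)
        rwa [Function.update_self] at this
      · intro j hj
        have hji : j ≠ i := fun h => hiS (h ▸ hj)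
        have := hall j (Finset.mem_insert_of_mem hj)
        rwa [Function.update_of_ne hji] at this
    have hcard : (R.filter fun a => ∀ j ∈ insert i S, v j a ≠ Function.update c' i c₀ j).card
        ≤ (R'.filter fun a => ∀ j ∈ S, v j a ≠ c' j).card := Finset.card_le_card hsub
    rw [Finset.card_insert_of_notMem hiS]
    calc (R.filter fun a => ∀ j ∈ insert i S, v j a ≠ Function.update c' i c₀ j).card
          * m ^ (S.card + 1)
        = ((R.filter fun a => ∀ j ∈ insert i S, v j a ≠ Function.update c' i c₀ j).card
          * m ^ S.card) * m := by ring
      _ ≤ ((R'.filter fun a => ∀ j ∈ S, v j a ≠ c' j).card * m ^ S.card) * m := by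
            exact Nat.mul_le_mul_right _ (Nat.mul_le_mul_right _ hcard)
      _ ≤ (R'.card * (m - 1) ^ S.card) * m := Nat.mul_le_mul_right _ hc'
      _ = (R'.card * m) * (m - 1) ^ S.card := by ring
      _ ≤ (R.card * (m - 1)) * (m - 1) ^ S.card := Nat.mul_le_mul_right _ hc₀
      _ = R.card * (m - 1) ^ (S.card + 1) := by ring

lemma phase2 (v : Fin k → α → ZMod m) :
    ∀ (n : ℕ) (R : Finset α) (S : Finset (Fin k)), R.card ≤ n → R.card ≤ S.card →
      ∃ c : Fin k → ZMod m, R.filter (fun a => ∀ i ∈ S, v i a ≠ c i) = ∅ := by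
  intro n
  induction n with
  | zero =>
    intro R S hR _
    have : R = ∅ := Finset.card_eq_zero.mp (Nat.le_zero.mp hR)
    exact ⟨fun _ => 0, by simp [this]⟩
  | succ n ih =>
    intro R S hR hRS
    rcases R.eq_empty_or_nonempty with h | h
    · exact ⟨fun _ => 0, by simp [h]⟩
    obtain ⟨a₀, ha₀⟩ := h
    have hS : S.Nonempty := by
      rw [← Finset.card_pos]
      exact lt_of_lt_of_le (Finset.card_pos.mpr ⟨a₀, ha₀⟩) hRS
    obtain ⟨i₀, hi₀⟩ := hS
    set R' := R.filter fun a => v i₀ a ≠ v i₀ a₀ with hR'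
    have hss : R' ⊂ R := by
      refine Finset.ssubset_iff_of_subset (Finset.filter_subset _ _) |>.mpr ?_
      exact ⟨a₀, ha₀, by simp [hR']⟩
    have hcard' : R'.card < R.card := Finset.card_lt_card hss
    obtain ⟨c', hc'⟩ := ih R' (S.erase i₀) (by omega)
      (by
        have := Finset.card_erase_of_mem hi₀
        omega)
    refine ⟨Function.update c' i₀ (v i₀ a₀), ?_⟩
    rw [Finset.eq_empty_iff_forall_notMem]
    intro a ha
    rw [Finset.mem_filter] at ha
    obtain ⟨haR, hall⟩ := ha
    have h1 := hall i₀ hi₀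
    rw [Function.update_self] at h1
    have haR' : a ∈ R' := by rw [hR', Finset.mem_filter]; exact ⟨haR, h1⟩
    have : a ∈ R'.filter (fun a => ∀ i ∈ S.erase i₀, v i a ≠ c' i) := by
      rw [Finset.mem_filter]
      refine ⟨haR', fun j hj => ?_⟩
      have hji : j ≠ i₀ := (Finset.mem_erase.mp hj).1
      have := hall j (Finset.mem_of_mem_erase hj)
      rwa [Function.update_of_ne hji] at this
    rw [hc'] at this
    exact absurd this (Finset.notMem_empty a)

end Cover

end EBK

namespace EBK

lemma cover_arith (m n : ℕ) (hm : 1 ≤ m) (hmn : m ≤ n) :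
    n * (m - 1) ^ (⌈(m : ℝ) * Real.log ((n : ℝ) / m)⌉₊)
      ≤ m ^ (⌈(m : ℝ) * Real.log ((n : ℝ) / m)⌉₊ + 1) := by
  set j := ⌈(m : ℝ) * Real.log ((n : ℝ) / m)⌉₊ with hj
  have hm0 : (0 : ℝ) < m := by exact_mod_cast hm
  have hn0 : (0 : ℝ) < n := lt_of_lt_of_le hm0 (by exact_mod_cast hmn)
  -- work in ℝ
  have key : (n : ℝ) * ((m : ℝ) - 1) ^ j ≤ (m : ℝ) ^ (j + 1) := by
    have h1 : (m : ℝ) - 1 = m * (1 - 1/m) := by field_simp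
    have h2 : (1 : ℝ) - 1/m ≤ Real.exp (-(1/m)) := by
      have := Real.add_one_le_exp (-(1/m))
      linarith
    have h3 : ((m : ℝ) - 1) ^ j ≤ (m : ℝ) ^ j * Real.exp (-(1/m)) ^ j := by
      rw [h1, mul_pow]
      refine mul_le_mul_of_nonneg_left ?_ (by positivity)
      refine pow_le_pow_left₀ ?_ h2 j
      have h1m : (1:ℝ)/m ≤ 1 := by
        rw [div_le_one hm0]; exact_mod_cast hm
      linarith
    have h4 : Real.exp (-(1/m)) ^ j = Real.exp (-(j / m)) := by
      rw [← Real.exp_nat_mul]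
      congr 1
      field_simp
    have h5 : (n : ℝ) * Real.exp (-(j/m)) ≤ m := by
      have hjm : (m : ℝ) * Real.log ((n:ℝ)/m) ≤ j := Nat.le_ceil _
      have hlog : Real.log ((n:ℝ)/m) ≤ (j : ℝ) / m := by
        rw [le_div_iff₀ hm0]; linarith [hjm]
      have : Real.exp (-(j/m)) ≤ Real.exp (-(Real.log ((n:ℝ)/m))) := by
        apply Real.exp_le_exp.mpr; linarith
      have hexp : Real.exp (-(Real.log ((n:ℝ)/m))) = (m:ℝ)/n := by
        rw [Real.exp_neg, Real.exp_log (by positivity)]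
        field_simp
      calc (n : ℝ) * Real.exp (-(j/m)) ≤ n * ((m:ℝ)/n) := by
            refine mul_le_mul_of_nonneg_left ?_ (le_of_lt hn0)
            rw [hexp] at this; exact this
        _ = m := by field_simp
    calc (n : ℝ) * ((m : ℝ) - 1) ^ j ≤ n * ((m:ℝ)^j * Real.exp (-(1/m)) ^ j) := by
          refine mul_le_mul_of_nonneg_left h3 (le_of_lt hn0)
      _ = (m:ℝ)^j * (n * Real.exp (-(j/m))) := by rw [h4]; ring
      _ ≤ (m:ℝ)^j * m := by
          refine mul_le_mul_of_nonneg_left h5 (by positivity)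
      _ = (m:ℝ)^(j+1) := by ring
  have hcast : ((n * (m-1)^j : ℕ) : ℝ) ≤ ((m ^ (j+1) : ℕ) : ℝ) := by
    push_cast [Nat.cast_sub hm]
    convert key using 2
  exact_mod_cast hcast

lemma covering {α : Type*} [Fintype α] [DecidableEq α] {k m : ℕ} [NeZero m]
    (v : Fin k → α → ZMod m) (hmn : m ≤ Fintype.card α)
    (hk : (m:ℝ) * (1 + Real.log ((Fintype.card α : ℝ) / m)) ≤ (k : ℝ)) :
    ∃ c : Fin k → ZMod m, ∀ a : α, ∃ i, v i a = c i := by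
  classical
  set n := Fintype.card α with hn
  have hm1 : 1 ≤ m := NeZero.pos m
  have hL0 : 0 ≤ Real.log ((n : ℝ)/m) := by
    apply Real.log_nonneg
    rw [le_div_iff₀ (by exact_mod_cast hm1)]
    simpa using (by exact_mod_cast hmn : (m:ℝ) ≤ n)
  set j := ⌈(m : ℝ) * Real.log ((n : ℝ) / m)⌉₊ with hj
  have hmk : m ≤ k := by
    have : (m : ℝ) ≤ k := le_trans (by nlinarith) hk
    exact_mod_cast this
  have hjk : j + m ≤ k := by
    have h1 : (m : ℝ) * Real.log ((n : ℝ)/m) ≤ ((k - m : ℕ) : ℝ) := by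
      rw [Nat.cast_sub hmk]
      nlinarith [hk]
    have := Nat.ceil_le.mpr h1
    omega
  -- phase 1 index set
  obtain ⟨S₁, hS₁sub, hS₁card⟩ := Finset.exists_subset_card_eq
    (show j ≤ (Finset.univ : Finset (Fin k)).card by simp; omega)
  obtain ⟨c₁, hc₁⟩ := phase1 v S₁ Finset.univ
  set R₁ := Finset.univ.filter fun a => ∀ i ∈ S₁, v i a ≠ c₁ i with hR₁
  have hR₁m : R₁.card ≤ m := by
    have harith := cover_arith m n hm1 hmn
    rw [hS₁card] at hc₁
    have hcardu : (Finset.univ : Finset α).card = n := rfl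
    rw [hcardu] at hc₁
    have h2 : R₁.card * m ^ j ≤ m * m ^ j := by
      calc R₁.card * m ^ j ≤ n * (m-1)^j := hc₁
        _ ≤ m ^ (j+1) := harith
        _ = m * m ^ j := by ring
    exact Nat.le_of_mul_le_mul_right h2 (Nat.pow_pos (n := j) (NeZero.pos m))
  -- phase 2
  set S₂ := (Finset.univ : Finset (Fin k)) \ S₁ with hS₂
  have hS₂card : R₁.card ≤ S₂.card := by
    rw [hS₂, Finset.card_sdiff_of_subset hS₁sub]
    simp only [Finset.card_univ, Fintype.card_fin]
    rw [hS₁card]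
    omega
  obtain ⟨c₂, hc₂⟩ := phase2 v R₁.card R₁ S₂ le_rfl hS₂card
  refine ⟨fun i => if i ∈ S₁ then c₁ i else c₂ i, ?_⟩
  intro a
  by_contra hcon
  push_neg at hcon
  have haR₁ : a ∈ R₁ := by
    rw [hR₁, Finset.mem_filter]
    refine ⟨Finset.mem_univ a, fun i hi => ?_⟩
    have := hcon i
    rwa [if_pos hi] at this
  have : a ∈ R₁.filter (fun a => ∀ i ∈ S₂, v i a ≠ c₂ i) := by
    rw [Finset.mem_filter]
    refine ⟨haR₁, fun i hi => ?_⟩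
    have hiS₁ : i ∉ S₁ := (Finset.mem_sdiff.mp hi).2
    have := hcon i
    rwa [if_neg hiS₁] at this
  rw [hc₂] at this
  exact absurd this (Finset.notMem_empty a)

end EBK

namespace EBK

/-! ### Additive characters into ℂ -/

section Eps
variable (m : ℕ) [NeZero m]

noncomputable def eps (z : ZMod m) : ℂ :=
  Complex.exp ((z.val : ℂ) / m * (2 * Real.pi * Complex.I))

variable {m}

lemma epsNat_mod (u : ℕ) :
    Complex.exp (((u % m : ℕ) : ℂ) / m * (2 * Real.pi * Complex.I))
      = Complex.exp ((u : ℂ) / m * (2 * Real.pi * Complex.I)) := by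
  conv_rhs => rw [← Nat.div_add_mod u m]
  have hm0 : (m : ℂ) ≠ 0 := by exact_mod_cast (NeZero.ne m)
  push_cast
  rw [add_div, add_mul, Complex.exp_add]
  have : (↑m * ↑(u / m) / ↑m : ℂ) = (u / m : ℕ) := by
    field_simp
  rw [this, Complex.exp_nat_mul_two_pi_mul_I, one_mul]

lemma epsNat_eq_one {u : ℕ} (hu : u < m)
    (h : Complex.exp ((u : ℂ) / m * (2 * Real.pi * Complex.I)) = 1) : u = 0 := by
  rw [Complex.exp_eq_one_iff] at h
  obtain ⟨t, ht⟩ := h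
  have h2pi : (2 * (Real.pi : ℂ) * Complex.I) ≠ 0 := by
    simp [Real.pi_ne_zero, Complex.I_ne_zero]
  have hval : ((u : ℂ) / m) = (t : ℂ) := mul_right_cancel₀ h2pi ht
  have hm0 : (0:ℝ) < m := by exact_mod_cast NeZero.pos m
  have hreal : ((u : ℝ) / m) = (t : ℝ) := by
    have h2 : (((u : ℝ) / m : ℝ) : ℂ) = (((t:ℝ)) : ℂ) := by push_cast; exact hval
    exact_mod_cast h2
  have h0 : (0:ℝ) ≤ (t:ℝ) := by rw [← hreal]; positivity
  have h1 : (t:ℝ) < 1 := by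
    rw [← hreal, div_lt_one hm0]
    exact_mod_cast hu
  have ht0 : t = 0 := by
    have h0' : (0:ℤ) ≤ t := by exact_mod_cast h0
    have h1' : t < 1 := by exact_mod_cast h1
    omega
  rw [ht0] at hreal
  simp only [Int.cast_zero] at hreal
  have hu0 : (u : ℝ) = 0 := by
    have := div_eq_zero_iff.mp hreal
    rcases this with h | h
    · exact h
    · exact absurd h (ne_of_gt hm0)
  exact_mod_cast hu0

lemma eps_zero : eps m 0 = 1 := by
  simp [eps, ZMod.val_zero]

lemma eps_add (a b : ZMod m) : eps m (a + b) = eps m a * eps m b := by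
  unfold eps
  rw [ZMod.val_add, epsNat_mod]
  push_cast
  rw [add_div, add_mul, Complex.exp_add]

lemma eps_eq_one {z : ZMod m} (h : eps m z = 1) : z = 0 := by
  have := epsNat_eq_one (ZMod.val_lt z) h
  exact (ZMod.val_eq_zero z).mp this

lemma eps_sum {β : Type*} (T : Finset β) (w : β → ZMod m) :
    eps m (∑ i ∈ T, w i) = ∏ i ∈ T, eps m (w i) := by
  classical
  induction T using Finset.induction_on with
  | empty => simp [eps_zero]
  | @insert i T hiT ih =>
    rw [Finset.sum_insert hiT, Finset.prod_insert hiT, eps_add, ih]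

end Eps

/-! ### The pairing on a product of cyclic groups -/

section Pair
variable {ι : Type*} [Fintype ι] [DecidableEq ι] (q : ι → ℕ) [∀ i, NeZero (q i)]
  (m : ℕ) [NeZero m] (hq : ∀ i, q i ∣ m)

noncomputable def phi (Q : ℕ) [NeZero Q] (hQ : Q ∣ m) : ZMod Q →+ ZMod m :=
  AddMonoidHom.mk' (fun a => ((m / Q * a.val : ℕ) : ZMod m)) (by
    intro a b
    have key : ∀ x : ℕ, ((m / Q * (x % Q) : ℕ) : ZMod m) = ((m / Q * x : ℕ) : ZMod m) := by
      intro x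
      conv_rhs => rw [← Nat.div_add_mod x Q]
      have h1 : m / Q * (Q * (x / Q) + x % Q) = m / Q * Q * (x / Q) + m / Q * (x % Q) := by ring
      rw [h1, Nat.div_mul_cancel hQ]
      push_cast
      simp [ZMod.natCast_self]
    show ((m / Q * (a + b).val : ℕ) : ZMod m) = _ + _
    rw [ZMod.val_add, key]
    push_cast [mul_add]
    ring)

lemma phi_apply {Q : ℕ} [NeZero Q] (hQ : Q ∣ m) (a : ZMod Q) :
    phi m Q hQ a = ((m / Q * a.val : ℕ) : ZMod m) := rfl

lemma phi_ne_zero {Q : ℕ} [NeZero Q] (hQ : Q ∣ m) {a : ZMod Q} (ha : a ≠ 0) :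
    phi m Q hQ a ≠ 0 := by
  have hm0 : 0 < m := NeZero.pos m
  have hQ0 : 0 < Q := NeZero.pos Q
  have hdiv : 0 < m / Q := Nat.div_pos (Nat.le_of_dvd hm0 hQ) hQ0
  have hval : 0 < a.val := by
    rcases Nat.eq_zero_or_pos a.val with h | h
    · exact absurd ((ZMod.val_eq_zero a).mp h) ha
    · exact h
  have hlt : m / Q * a.val < m := by
    calc m / Q * a.val < m / Q * Q := by
          exact (mul_lt_mul_iff_right₀ hdiv).mpr (ZMod.val_lt a)
      _ = m := Nat.div_mul_cancel hQ
  rw [phi_apply, Ne, ZMod.natCast_eq_zero_iff]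
  intro hdvd
  have := Nat.le_of_dvd (by positivity) hdvd
  omega

noncomputable def pairG (x y : ∀ i, ZMod (q i)) : ZMod m :=
  ∑ i, phi m (q i) (hq i) (x i * y i)

noncomputable def pairHom (y : ∀ i, ZMod (q i)) : (∀ i, ZMod (q i)) →+ ZMod m :=
  AddMonoidHom.mk' (fun x => pairG q m hq x y) (by
    intro x x'
    unfold pairG
    rw [← Finset.sum_add_distrib]
    apply Finset.sum_congr rfl
    intro i _
    rw [← map_add]
    congr 1
    simp [add_mul])

lemma pairHom_apply (x y : ∀ i, ZMod (q i)) : pairHom q m hq y x = pairG q m hq x y := rfl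

end Pair

end EBK

namespace EBK

section Orth
variable {ι : Type*} [Fintype ι] [DecidableEq ι] (q : ι → ℕ) [∀ i, NeZero (q i)]
  (m : ℕ) [NeZero m] (hq : ∀ i, q i ∣ m)

-- component shift lemma
lemma comp_sum_zero {Q : ℕ} [NeZero Q] (hQ : Q ∣ m) {a : ZMod Q} (ha : a ≠ 0) :
    ∑ b : ZMod Q, eps m (phi m Q hQ (a * b)) = 0 := by
  set f : ZMod Q → ℂ := fun b => eps m (phi m Q hQ (a * b)) with hf
  set E : ℂ := eps m (phi m Q hQ a) with hE
  have hstep : ∀ b, f (b + 1) = f b * E := by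
    intro b
    rw [hf, hE]
    simp only
    rw [mul_add, mul_one, map_add, eps_add]
  have hshift : ∑ b : ZMod Q, f b = ∑ b : ZMod Q, f (b + 1) :=
    (Fintype.sum_equiv (Equiv.addRight (1 : ZMod Q)) _ _ (fun b => rfl)).symm
  have h1 : ∑ b : ZMod Q, f b = (∑ b : ZMod Q, f b) * E := by
    calc ∑ b : ZMod Q, f b = ∑ b : ZMod Q, f (b + 1) := hshift
      _ = ∑ b : ZMod Q, f b * E := Finset.sum_congr rfl fun b _ => hstep b
      _ = (∑ b : ZMod Q, f b) * E := by rw [Finset.sum_mul]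
  have hE1 : E ≠ 1 := by
    intro h
    exact phi_ne_zero m hQ ha (eps_eq_one h)
  have : (∑ b : ZMod Q, f b) * (1 - E) = 0 := by
    rw [mul_sub, mul_one, ← h1, sub_self]
  rcases mul_eq_zero.mp this with h | h
  · exact h
  · exact absurd (sub_eq_zero.mp h).symm hE1
  
lemma sum_eps_pair_zero :
    ∑ y : (∀ i, ZMod (q i)), eps m (pairG q m hq 0 y)
      = (Fintype.card (∀ i, ZMod (q i)) : ℂ) := by
  have : ∀ y : (∀ i, ZMod (q i)), pairG q m hq 0 y = 0 := by
    intro y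
    unfold pairG
    apply Finset.sum_eq_zero
    intro i _
    simp
  simp [this, eps_zero]

lemma sum_eps_pair {x : ∀ i, ZMod (q i)} (hx : x ≠ 0) :
    ∑ y : (∀ i, ZMod (q i)), eps m (pairG q m hq x y) = 0 := by
  classical
  have hrw : ∀ y : (∀ i, ZMod (q i)),
      eps m (pairG q m hq x y) = ∏ i, eps m (phi m (q i) (hq i) (x i * y i)) := by
    intro y
    unfold pairG
    exact eps_sum _ _
  simp_rw [hrw]
  have hswap : ∑ y : (∀ i, ZMod (q i)), ∏ i, eps m (phi m (q i) (hq i) (x i * y i))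
      = ∏ i, ∑ b : ZMod (q i), eps m (phi m (q i) (hq i) (x i * b)) := by
    rw [Finset.prod_univ_sum]
    rw [Fintype.piFinset_univ]
  rw [hswap]
  obtain ⟨i₀, hi₀⟩ : ∃ i₀, x i₀ ≠ 0 := by
    by_contra hcon
    push_neg at hcon
    exact hx (funext hcon)
  apply Finset.prod_eq_zero (Finset.mem_univ i₀)
  exact comp_sum_zero m (hq i₀) hi₀

end Orth

end EBK

namespace EBK

section Main
variable {ι : Type*} [Fintype ι] [DecidableEq ι] (q : ι → ℕ) [∀ i, NeZero (q i)]
  (m : ℕ) [NeZero m] (hq : ∀ i, q i ∣ m)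

lemma no_cover {k : ℕ} (g : Fin k → (∀ i, ZMod (q i))) (hg : IsZeroSumFree g)
    (c : Fin k → ZMod m) :
    ¬ (∀ y : (∀ i, ZMod (q i)), ∃ i, pairG q m hq (g i) y = c i) := by
  classical
  intro hcov
  let B := (∀ i, ZMod (q i))
  set Z : ℂ := ∑ y : B, ∏ i : Fin k, (1 - eps m (pairG q m hq (g i) y - c i)) with hZ
  have hZ0 : Z = 0 := by
    rw [hZ]
    apply Finset.sum_eq_zero
    intro y _
    obtain ⟨i, hi⟩ := hcov y
    apply Finset.prod_eq_zero (Finset.mem_univ i)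
    rw [hi, sub_self, eps_zero, sub_self]
  have hneg : ∀ (T : Finset (Fin k)) (u : Fin k → ℂ),
      ∏ i ∈ T, -u i = (-1)^T.card * ∏ i ∈ T, u i := by
    intro T u
    rw [← Finset.prod_const (-1 : ℂ), ← Finset.prod_mul_distrib]
    exact Finset.prod_congr rfl fun i _ => by ring
  have hexpand : Z = ∑ T ∈ (Finset.univ : Finset (Fin k)).powerset,
      ∑ y : B, (-1)^T.card * eps m (∑ i ∈ T, (pairG q m hq (g i) y - c i)) := by
    rw [hZ, Finset.sum_comm]
    apply Finset.sum_congr rfl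
    intro y _
    calc ∏ i : Fin k, (1 - eps m (pairG q m hq (g i) y - c i))
        = ∏ i : Fin k, ((- eps m (pairG q m hq (g i) y - c i)) + 1) := by
          exact Finset.prod_congr rfl fun i _ => by ring
      _ = ∑ T ∈ (Finset.univ : Finset (Fin k)).powerset,
            (∏ i ∈ T, (- eps m (pairG q m hq (g i) y - c i)))
              * ∏ _i ∈ Finset.univ \ T, (1:ℂ) :=
          Finset.prod_add _ _ _
      _ = ∑ T ∈ (Finset.univ : Finset (Fin k)).powerset,
            (-1)^T.card * eps m (∑ i ∈ T, (pairG q m hq (g i) y - c i)) := by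
          apply Finset.sum_congr rfl
          intro T _
          rw [Finset.prod_const_one, mul_one, hneg, eps_sum]
  have hterm : ∀ T ∈ (Finset.univ : Finset (Fin k)).powerset, T ≠ ∅ →
      ∑ y : B, (-1)^T.card * eps m (∑ i ∈ T, (pairG q m hq (g i) y - c i)) = 0 := by
    intro T _ hTne
    have hTnonempty : T.Nonempty := Finset.nonempty_of_ne_empty hTne
    have hsig : (∑ i ∈ T, g i) ≠ 0 := hg T hTnonempty
    have hargs : ∀ y : B, ∑ i ∈ T, (pairG q m hq (g i) y - c i)
        = pairG q m hq (∑ i ∈ T, g i) y + (- ∑ i ∈ T, c i) := by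
      intro y
      rw [Finset.sum_sub_distrib]
      have : ∑ i ∈ T, pairG q m hq (g i) y = pairG q m hq (∑ i ∈ T, g i) y := by
        have hmap := map_sum (pairHom q m hq y) g T
        simp only [pairHom_apply] at hmap
        exact hmap.symm
      rw [this, sub_eq_add_neg]
    calc ∑ y : B, (-1)^T.card * eps m (∑ i ∈ T, (pairG q m hq (g i) y - c i))
        = ∑ y : B, ((-1)^T.card * eps m (- ∑ i ∈ T, c i))
            * eps m (pairG q m hq (∑ i ∈ T, g i) y) := by
          apply Finset.sum_congr rfl
          intro y _
          rw [hargs y, eps_add]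
          ring
      _ = ((-1)^T.card * eps m (- ∑ i ∈ T, c i))
            * ∑ y : B, eps m (pairG q m hq (∑ i ∈ T, g i) y) := by
          rw [Finset.mul_sum]
      _ = 0 := by
          rw [sum_eps_pair q m hq hsig, mul_zero]
  have hZcard : Z = (Fintype.card B : ℂ) := by
    rw [hexpand]
    rw [Finset.sum_eq_single_of_mem (∅ : Finset (Fin k))
      (Finset.empty_mem_powerset _) (fun T hT hTne => hterm T hT hTne)]
    simp [eps_zero]
  have hcard0 : (Fintype.card B : ℂ) ≠ 0 := by
    exact_mod_cast (Fintype.card_pos (α := B)).ne'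
  rw [hZ0] at hZcard
  exact hcard0 hZcard.symm

theorem main_pi (hq : ∀ i, q i ∣ m) (hmn : m ≤ Fintype.card (∀ i, ZMod (q i))) {k : ℕ}
    (g : Fin k → (∀ i, ZMod (q i))) (hg : IsZeroSumFree g) :
    (k : ℝ) < m * (1 + Real.log ((Fintype.card (∀ i, ZMod (q i)) : ℝ) / m)) := by
  by_contra hcon
  push_neg at hcon
  obtain ⟨c, hc⟩ := covering (fun i y => pairG q m hq (g i) y) hmn hcon
  exact no_cover q m hq g hg c hc

end Main

end EBK

namespace EBK

set_option maxHeartbeats 1000000 in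
theorem main_general {G : Type*} [AddCommGroup G] [Fintype G]
    (m : ℕ) (hm : IsGreatest (Set.range (addOrderOf : G → ℕ)) m)
    {k : ℕ} (g : Fin k → G) (hg : IsZeroSumFree g) :
    (k : ℝ) < m * (1 + Real.log ((Fintype.card G : ℝ) / m)) := by
  classical
  have hm_pos : 0 < m := by
    obtain ⟨x, hx⟩ := hm.1
    rw [← hx]
    exact addOrderOf_pos x
  haveI : NeZero m := ⟨hm_pos.ne'⟩
  have hexp : AddMonoid.exponent G = m := by
    rw [AddMonoid.exponent_eq_iSup_addOrderOf (fun x => addOrderOf_pos x), iSup]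
    exact hm.csSup_eq
  obtain ⟨ι, hι, n, hn1, ⟨e⟩⟩ := AddCommGroup.equiv_directSum_zmod_of_finite' G
  haveI := hι
  haveI : DecidableEq ι := Classical.decEq ι
  haveI : ∀ i, NeZero (n i) := fun i => ⟨by have := hn1 i; omega⟩
  have e2 : (DirectSum ι fun i => ZMod (n i)) ≃+ (∀ i, ZMod (n i)) :=
    AddEquiv.mk' DFinsupp.equivFunOnFintype (by
      intro a b
      ext j
      simp [DFinsupp.equivFunOnFintype, DFinsupp.add_apply])
  set iso : G ≃+ (∀ i, ZMod (n i)) := e.trans e2 with hiso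
  have hsm : ∀ x : G, m • x = 0 := by
    intro x
    have h1 : addOrderOf x ∣ m := hexp ▸ AddMonoid.addOrder_dvd_exponent x
    exact addOrderOf_dvd_iff_nsmul_eq_zero.mp h1
  have hdvd : ∀ i, n i ∣ m := by
    intro i
    have h0 : m • (iso.symm (Pi.single i (1 : ZMod (n i)))) = 0 := hsm _
    have h1 : m • (Pi.single i (1 : ZMod (n i)) : ∀ j, ZMod (n j)) = 0 := by
      have := congrArg iso h0
      rwa [map_nsmul, AddEquiv.apply_symm_apply, map_zero] at this
    have h2 : m • (1 : ZMod (n i)) = 0 := by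
      have := congrFun h1 i
      simpa using this
    have h3 : ((m : ZMod (n i))) = 0 := by
      rw [nsmul_eq_mul, mul_one] at h2
      exact h2
    exact (ZMod.natCast_eq_zero_iff m (n i)).mp h3
  have hcards : Fintype.card (∀ i, ZMod (n i)) = Fintype.card G :=
    (Fintype.card_congr iso.toEquiv).symm
  have hmn : m ≤ Fintype.card (∀ i, ZMod (n i)) := by
    rw [hcards]
    obtain ⟨x, hx⟩ := hm.1
    rw [← hx]
    exact addOrderOf_le_card_univ
  have hg' : IsZeroSumFree (fun j => iso (g j)) := by
    intro S hS h0
    rw [← map_sum] at h0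
    exact hg S hS ((AddEquiv.map_eq_zero_iff iso).mp h0)
  have := main_pi n m hdvd hmn (fun j => iso (g j)) hg'
  rwa [hcards] at this

end EBK

/-- The Davenport-type constant: the maximal length of a zero-sum-free sequence. -/
noncomputable def davenport (G : Type*) [AddCommGroup G] [Fintype G] : ℕ :=
  sSup {k : ℕ | ∃ g : Fin k → G, IsZeroSumFree g}

theorem davenport_lt_EmdeBoas_Kruyswijk {G : Type*} [AddCommGroup G] [Fintype G]
    (m : ℕ) (hm : IsGreatest (Set.range (addOrderOf : G → ℕ)) m) :
    (davenport G : ℝ) < m * (1 + Real.log ((Fintype.card G : ℝ) / m)) := by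
  classical
  set D := {k : ℕ | ∃ g : Fin k → G, IsZeroSumFree g} with hD
  have hne : D.Nonempty := by
    refine ⟨0, Fin.elim0, ?_⟩
    intro S hS
    obtain ⟨i, _⟩ := hS
    exact i.elim0
  have key : ∀ k ∈ D, (k : ℝ) < m * (1 + Real.log ((Fintype.card G : ℝ) / m)) := by
    rintro k ⟨g, hg⟩
    exact EBK.main_general m hm g hg
  have hbdd : BddAbove D := by
    refine ⟨⌈(m : ℝ) * (1 + Real.log ((Fintype.card G : ℝ) / m))⌉₊, ?_⟩
    intro k hk
    have h1 := key k hk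
    have h2 : (k : ℝ) ≤ (⌈(m : ℝ) * (1 + Real.log ((Fintype.card G : ℝ) / m))⌉₊ : ℝ) :=
      le_trans (le_of_lt h1) (Nat.le_ceil _)
    exact_mod_cast h2
  have hmem : sSup D ∈ D := Nat.sSup_mem hne hbdd
  exact key _ hmem
end

section
/- Let G be a finite abelian group with n = n(G), and let r > k > n be integers. Then any sequence of r elements of G contains at least C(r,k)/C(r,n) distinct subsequences of length at most k and at least k − n whose sum is the identity. -/
open Finset

lemma zsf_len_le {G : Type*} [AddCommGroup G] [Fintype G] {m : ℕ} {g : Fin m → G}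
    (h : IsZeroSumFree g) : m ≤ Fintype.card G := by
  have hinj : Function.Injective (fun i : Fin m => ∑ j ∈ Finset.Iic i, g j) := by
    intro i i' hii
    by_contra hne
    wlog hlt : i < i' generalizing i i'
    · exact this hii.symm (Ne.symm hne) (lt_of_le_of_ne (not_lt.mp hlt) (Ne.symm hne))
    have hsub : Finset.Iic i ⊆ Finset.Iic i' := Finset.Iic_subset_Iic.mpr hlt.le
    simp only at hii
    have h0 : ∑ j ∈ Finset.Iic i' \ Finset.Iic i, g j = 0 := by
      rw [Finset.sum_sdiff_eq_sub hsub, hii]; exact sub_self _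
    have hne' : (Finset.Iic i' \ Finset.Iic i).Nonempty :=
      ⟨i', by simp [Finset.mem_sdiff, hlt.not_ge]⟩
    exact h _ hne' h0
  simpa using Fintype.card_le_of_injective _ hinj

lemma zsf_bddAbove (G : Type*) [AddCommGroup G] [Fintype G] :
    BddAbove {k : ℕ | ∃ g : Fin k → G, IsZeroSumFree g} :=
  ⟨Fintype.card G, fun _ ⟨_, hg⟩ => zsf_len_le hg⟩

lemma le_davenport {G : Type*} [AddCommGroup G] [Fintype G] {m : ℕ} (g : Fin m → G)
    (h : IsZeroSumFree g) : m ≤ davenport G :=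
  le_csSup (zsf_bddAbove G) ⟨g, h⟩

lemma card_le_davenport {G : Type*} [AddCommGroup G] [Fintype G] {r : ℕ} (g : Fin r → G)
    (T : Finset (Fin r)) (h : ∀ S ⊆ T, S.Nonempty → ∑ i ∈ S, g i ≠ 0) :
    T.card ≤ davenport G := by
  classical
  let e := T.equivFin.symm
  refine le_davenport (fun i => g (e i : Fin r)) ?_
  intro S hS hsum
  have hinj : Function.Injective (fun i : Fin T.card => ((e i : T) : Fin r)) :=
    Subtype.val_injective.comp e.injective
  refine h (S.image fun i => ((e i : T) : Fin r)) ?_ (hS.image _) ?_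
  · intro x hx
    simp only [Finset.mem_image] at hx
    obtain ⟨i, _, rfl⟩ := hx
    exact (e i).2
  · rwa [Finset.sum_image fun x _ y _ hxy => hinj hxy]

lemma extract_zero_sum {G : Type*} [AddCommGroup G] [Fintype G] {r : ℕ} (g : Fin r → G)
    (T : Finset (Fin r)) :
    ∃ S, S ⊆ T ∧ ∑ i ∈ S, g i = 0 ∧ (T \ S).card ≤ davenport G := by
  classical
  induction T using Finset.strongInductionOn with
  | _ T ih =>
    by_cases hz : ∀ S ⊆ T, S.Nonempty → ∑ i ∈ S, g i ≠ 0
    · exact ⟨∅, Finset.empty_subset _, Finset.sum_empty, by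
        simpa using card_le_davenport g T hz⟩
    · push_neg at hz
      obtain ⟨S₀, hS₀T, hS₀ne, hS₀sum⟩ := hz
      have hss : T \ S₀ ⊂ T := Finset.sdiff_ssubset hS₀T hS₀ne
      obtain ⟨S₁, hS₁sub, hS₁sum, hS₁card⟩ := ih _ hss
      refine ⟨S₀ ∪ S₁, ?_, ?_, ?_⟩
      · exact Finset.union_subset hS₀T (hS₁sub.trans (Finset.sdiff_subset))
      · have hdisj : Disjoint S₀ S₁ := Finset.disjoint_left.mpr
          fun a ha ha1 => (Finset.mem_sdiff.mp (hS₁sub ha1)).2 ha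
        rw [Finset.sum_union hdisj, hS₀sum, hS₁sum, add_zero]
      · have heq : T \ (S₀ ∪ S₁) = (T \ S₀) \ S₁ := by
          ext x; simp only [Finset.mem_sdiff, Finset.mem_union]; tauto
        rwa [heq]

lemma choose_add_le (m j d : ℕ) : m.choose j ≤ (m + d).choose (j + d) := by
  induction d with
  | zero => simp
  | succ d ihd =>
    calc m.choose j ≤ (m + d).choose (j + d) := ihd
      _ ≤ (m + d).choose (j + d) + (m + d).choose (j + d + 1) := Nat.le_add_right _ _
      _ = (m + (d+1)).choose (j + (d+1)) := by
          rw [show m + (d+1) = (m+d)+1 by ring, show j + (d+1) = (j+d)+1 by ring,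
            Nat.choose_succ_succ]

open Finset Classical in
theorem many_zero_sum_subsequences {G : Type*} [AddCommGroup G] [Fintype G]
    (n : ℕ) (hn : n = davenport G) (r k : ℕ) (hkn : n < k) (hrk : k < r)
    (g : Fin r → G) :
    ((r.choose k : ℝ) / (r.choose n : ℝ)) ≤
      ((univ.filter (fun S : Finset (Fin r) =>
        k - n ≤ S.card ∧ S.card ≤ k ∧ ∑ i ∈ S, g i = 0)).card : ℝ) := by
  classical
  set Good := univ.filter (fun S : Finset (Fin r) =>
    k - n ≤ S.card ∧ S.card ≤ k ∧ ∑ i ∈ S, g i = 0) with hGood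
  choose F hFsub hFsum hFcard using fun T => extract_zero_sum g T
  -- maps to
  have hmaps : ∀ T ∈ powersetCard k (univ : Finset (Fin r)), F T ∈ Good := by
    intro T hT
    rw [Finset.mem_powersetCard] at hT
    obtain ⟨-, hTk⟩ := hT
    have h1 : (T \ F T).card = T.card - (F T).card := Finset.card_sdiff_of_subset (hFsub T)
    have h2 : (F T).card ≤ T.card := Finset.card_le_card (hFsub T)
    have := hFcard T
    rw [hGood, Finset.mem_filter]
    refine ⟨Finset.mem_univ _, ?_, ?_, hFsum T⟩ <;> omega
  -- fiber bound
  have hfiber : ∀ S ∈ Good,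
      ((powersetCard k (univ : Finset (Fin r))).filter (fun T => F T = S)).card ≤
        r.choose n := by
    intro S hS
    rw [hGood, Finset.mem_filter] at hS
    obtain ⟨-, hS1, hS2, -⟩ := hS
    have hstep : ((powersetCard k (univ : Finset (Fin r))).filter (fun T => F T = S)).card ≤
        (powersetCard (k - S.card) ((univ : Finset (Fin r)) \ S)).card := by
      apply Finset.card_le_card_of_injOn (fun T => T \ S)
      · intro T hT
        rw [Finset.mem_coe, Finset.mem_filter, Finset.mem_powersetCard] at hT
        obtain ⟨⟨-, hTk⟩, hFT⟩ := hT
        have hSsubT : S ⊆ T := hFT ▸ hFsub T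
        simp only [Finset.mem_coe, Finset.mem_powersetCard]
        constructor
        · exact Finset.sdiff_subset_sdiff (Finset.subset_univ T) (le_refl S)
        · rw [Finset.card_sdiff_of_subset hSsubT, hTk]
      · intro T hT T' hT' hTT'
        simp only [Finset.coe_filter, Set.mem_setOf_eq, Finset.mem_powersetCard] at hT hT'
        have h1 : S ⊆ T := hT.2 ▸ hFsub T
        have h2 : S ⊆ T' := hT'.2 ▸ hFsub T'
        simp only at hTT'
        rw [← Finset.sdiff_union_of_subset h1, ← Finset.sdiff_union_of_subset h2, hTT']
    rw [Finset.card_powersetCard] at hstep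
    have hcard : ((univ : Finset (Fin r)) \ S).card = r - S.card := by
      rw [Finset.card_sdiff_of_subset (Finset.subset_univ S)]; simp
    rw [hcard] at hstep
    refine hstep.trans ?_
    -- (r - S.card).choose (k - S.card) ≤ r.choose n
    set s := S.card
    have hj : k - s ≤ n := by omega
    have e1 : r - s = (r - k) + (k - s) := by omega
    calc (r - s).choose (k - s) = ((r-k) + (k-s)).choose (k - s) := by rw [e1]
      _ ≤ ((r-k) + (k-s) + (n - (k-s))).choose ((k-s) + (n - (k-s))) := choose_add_le _ _ _
      _ = ((r-k) + n).choose n := by congr 1 <;> omega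
      _ ≤ r.choose n := Nat.choose_le_choose n (by omega)
  have hmain : r.choose k ≤ r.choose n * Good.card := by
    have := Finset.card_le_mul_card_image_of_maps_to hmaps (r.choose n) hfiber
    rwa [Finset.card_powersetCard, Finset.card_univ, Fintype.card_fin] at this
  have hpos : (0:ℝ) < (r.choose n : ℝ) := by
    exact_mod_cast Nat.choose_pos (by omega : n ≤ r)
  rw [div_le_iff₀ hpos]
  calc (r.choose k : ℝ) ≤ (r.choose n : ℝ) * (Good.card : ℝ) := by exact_mod_cast hmain
    _ = (Good.card : ℝ) * (r.choose n : ℝ) := mul_comm _ _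
end
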